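/- Define, for each natural number k ≥ 1, a_k = Σ_{r=1}^{k} (2^k/2^{r+1})·( C(2^{k-r}, 2)·(4^r - 3^r) + 2^{k-r}·C(2^r + 1, 2) ), where C(n,2) denotes the binomial coefficient n choose 2. Then the sequence a_k / 8^k converges to 1/10 as k → ∞. In particular, the lower bound on the rate K/q^3 of the Hermitian lifted code over F_{q^2} with q = 2^k tends to 0.1. -/
import Mathlib

open Filter

lemma geomIcc (x : ℝ) (hx : x ≠ 1) (k : ℕ) :
    ∑ r ∈ Finset.Icc 1 k, x ^ r = x * (x ^ k - 1) / (x - 1) := by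
  induction k with
  | zero => simp
  | succ n ih =>
    rw [Finset.sum_Icc_succ_top (Nat.succ_le_succ (Nat.zero_le n)), ih]
    have : x - 1 ≠ 0 := sub_ne_zero.mpr hx
    field_simp
    ring

theorem hermitian_lifted_code_rate_limit :
    Filter.Tendsto
      (fun k : ℕ =>
        (∑ r ∈ Finset.Icc 1 k, (2 : ℝ) ^ k / 2 ^ (r + 1) *
            ((Nat.choose (2 ^ (k - r)) 2 : ℝ) * ((4 : ℝ) ^ r - 3 ^ r)
              + (2 : ℝ) ^ (k - r) * (Nat.choose (2 ^ r + 1) 2 : ℝ))) / 8 ^ k)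
      Filter.atTop (nhds (1 / 10)) := by
  have key : ∀ k : ℕ,
      (∑ r ∈ Finset.Icc 1 k, (2 : ℝ) ^ k / 2 ^ (r + 1) *
            ((Nat.choose (2 ^ (k - r)) 2 : ℝ) * ((4 : ℝ) ^ r - 3 ^ r)
              + (2 : ℝ) ^ (k - r) * (Nat.choose (2 ^ r + 1) 2 : ℝ))) / 8 ^ k
      = (1/4 : ℝ) * ((1/2 * ((1/2:ℝ)^k - 1)/(1/2 - 1)) - (3/8 * ((3/8:ℝ)^k - 1)/(3/8 - 1))
          + (1/2:ℝ)^k * ((3/4 * ((3/4:ℝ)^k - 1)/(3/4 - 1)) + (1/2 * ((1/2:ℝ)^k - 1)/(1/2 - 1)))) := by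
    intro k
    have hterm : ∀ r ∈ Finset.Icc 1 k,
        (2 : ℝ) ^ k / 2 ^ (r + 1) *
            ((Nat.choose (2 ^ (k - r)) 2 : ℝ) * ((4 : ℝ) ^ r - 3 ^ r)
              + (2 : ℝ) ^ (k - r) * (Nat.choose (2 ^ r + 1) 2 : ℝ)) / 8 ^ k
        = (1/4 : ℝ) * (1/2:ℝ)^r - (1/4) * (3/8:ℝ)^r
            + ((1/2:ℝ)^k / 4) * (3/4:ℝ)^r + ((1/2:ℝ)^k / 4) * (1/2:ℝ)^r := by
      intro r hr
      obtain ⟨hr1, hrk⟩ := Finset.mem_Icc.mp hr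
      rw [Nat.cast_choose_two, Nat.cast_choose_two]
      push_cast
      have h1 : (2:ℝ)^(k-r) = 2^k / 2^r := pow_sub₀ (2:ℝ) (by norm_num) hrk
      have h4 : (4:ℝ)^r = ((2:ℝ)^r)^2 := by
        rw [show (4:ℝ) = 2^2 by norm_num, ← pow_mul, mul_comm, pow_mul]
      have h8 : (8:ℝ)^k = ((2:ℝ)^k)^3 := by
        rw [show (8:ℝ) = 2^3 by norm_num, ← pow_mul, mul_comm, pow_mul]
      have h12r : (1/2:ℝ)^r = 1/(2:ℝ)^r := by rw [div_pow, one_pow]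
      have h12k : (1/2:ℝ)^k = 1/(2:ℝ)^k := by rw [div_pow, one_pow]
      have h38 : (3/8:ℝ)^r = (3:ℝ)^r/((2:ℝ)^r)^3 := by
        rw [div_pow, show (8:ℝ) = 2^3 by norm_num, ← pow_mul, mul_comm, pow_mul]
      have h34 : (3/4:ℝ)^r = (3:ℝ)^r/((2:ℝ)^r)^2 := by
        rw [div_pow, show (4:ℝ) = 2^2 by norm_num, ← pow_mul, mul_comm, pow_mul]
      have hk0 : (2:ℝ)^k ≠ 0 := by positivity
      have hr0 : (2:ℝ)^r ≠ 0 := by positivity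
      rw [h1, h4, h8, h12r, h12k, h38, h34, pow_succ]
      field_simp
      ring
    rw [Finset.sum_div, Finset.sum_congr rfl hterm]
    rw [Finset.sum_add_distrib, Finset.sum_add_distrib, Finset.sum_sub_distrib,
      ← Finset.mul_sum, ← Finset.mul_sum, ← Finset.mul_sum, ← Finset.mul_sum,
      geomIcc _ (by norm_num), geomIcc _ (by norm_num), geomIcc _ (by norm_num)]
    ring
  have hhalf : Tendsto (fun k : ℕ => (1/2:ℝ)^k) atTop (nhds 0) :=
    tendsto_pow_atTop_nhds_zero_of_lt_one (by norm_num) (by norm_num)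
  have h38 : Tendsto (fun k : ℕ => (3/8:ℝ)^k) atTop (nhds 0) :=
    tendsto_pow_atTop_nhds_zero_of_lt_one (by norm_num) (by norm_num)
  have h34 : Tendsto (fun k : ℕ => (3/4:ℝ)^k) atTop (nhds 0) :=
    tendsto_pow_atTop_nhds_zero_of_lt_one (by norm_num) (by norm_num)
  have t1 : Tendsto (fun k : ℕ => (1/2 * ((1/2:ℝ)^k - 1)/(1/2 - 1))) atTop
      (nhds (1/2 * ((0:ℝ) - 1)/(1/2 - 1))) :=
    ((hhalf.sub_const 1).const_mul (1/2)).div_const _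
  have t2 : Tendsto (fun k : ℕ => (3/8 * ((3/8:ℝ)^k - 1)/(3/8 - 1))) atTop
      (nhds (3/8 * ((0:ℝ) - 1)/(3/8 - 1))) :=
    ((h38.sub_const 1).const_mul (3/8)).div_const _
  have t3 : Tendsto (fun k : ℕ => (3/4 * ((3/4:ℝ)^k - 1)/(3/4 - 1))) atTop
      (nhds (3/4 * ((0:ℝ) - 1)/(3/4 - 1))) :=
    ((h34.sub_const 1).const_mul (3/4)).div_const _
  have total := (((t1.sub t2).add (hhalf.mul (t3.add t1))).const_mul (1/4:ℝ))
  have : Tendsto (fun k : ℕ =>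
      (1/4 : ℝ) * ((1/2 * ((1/2:ℝ)^k - 1)/(1/2 - 1)) - (3/8 * ((3/8:ℝ)^k - 1)/(3/8 - 1))
          + (1/2:ℝ)^k * ((3/4 * ((3/4:ℝ)^k - 1)/(3/4 - 1)) + (1/2 * ((1/2:ℝ)^k - 1)/(1/2 - 1)))))
      atTop (nhds (1/10)) := by
    convert total using 2
    norm_num
  exact this.congr fun k => (key k).symm
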